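/- Let A be a unital Banach algebra and X a unit-linked Banach A-bimodule. Suppose θ ≥ 0, f : A → X with f(0) = 0, and g : A → X with g(0) = g(1) = 0 satisfy max{‖f(λa + λb + c²) − λf(a) − λf(b) − c·f(c) − g(c)·c‖, ‖g(λab + λc) − λa·g(b) − λ·g(a)·b − λg(c)‖} ≤ θ for all a,b,c ∈ A and all λ ∈ ℂ with |λ| = 1. Then there exists a unique generalized Jordan derivation d : A → X with ‖f(a) − d(a)‖ ≤ θ for all a ∈ A. -/

import Mathlib

open Filter Topology MulOpposite

set_option linter.unusedSectionVars false
set_option linter.unusedVariables false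

section

variable {A X : Type*}
  [NormedRing A] [NormedAlgebra ℂ A] [CompleteSpace A]
  [NormedAddCommGroup X] [NormedSpace ℂ X] [CompleteSpace X]
  [Module A X] [Module Aᵐᵒᵖ X]
  [IsBoundedSMul A X] [IsBoundedSMul Aᵐᵒᵖ X]
  [SMulCommClass A Aᵐᵒᵖ X]
  [IsScalarTower ℂ A X] [IsScalarTower ℂ Aᵐᵒᵖ X]

/-- A Jordan derivation from `A` into the bimodule `X`: a `ℂ`-linear map `δ` with
`δ(a²) = a·δ(a) + δ(a)·a`. -/
def IsJordanDeriv (δ : A → X) : Prop :=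
  (∀ x y : A, δ (x + y) = δ x + δ y) ∧ (∀ (μ : ℂ) (x : A), δ (μ • x) = μ • δ x) ∧
    ∀ a : A, δ (a ^ 2) = a • δ a + op a • δ a

/-- A generalized Jordan derivation: a `ℂ`-linear map `d` such that there is a Jordan
derivation `δ` with `d(a²) = a·d(a) + δ(a)·a`. -/
def IsGenJordanDeriv (d : A → X) : Prop :=
  (∀ x y : A, d (x + y) = d x + d y) ∧ (∀ (μ : ℂ) (x : A), d (μ • x) = μ • d x) ∧
    ∃ δ : A → X, IsJordanDeriv δ ∧ ∀ a : A, d (a ^ 2) = a • d a + op a • δ a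

/-- the approximating sequence -/
noncomputable def hySeq (h : A → X) (x : A) (n : ℕ) : X :=
  ((2:ℂ)^n)⁻¹ • h ((2:ℂ)^n • x)

lemma hy_tendsto_zero {w : ℕ → X} {θ : ℝ} (hw : ∀ n, ‖w n‖ ≤ θ * (1/2:ℝ)^n) :
    Tendsto w atTop (𝓝 0) := by
  apply squeeze_zero_norm hw
  have : Tendsto (fun n : ℕ => (1/2:ℝ)^n) atTop (𝓝 0) :=
    tendsto_pow_atTop_nhds_zero_of_lt_one (by norm_num) (by norm_num)
  simpa using this.const_mul θ

lemma hy_norm_aux {h : A → X} {θ : ℝ} (E : ∀ x y : A, ‖h (x + y) - h x - h y‖ ≤ θ)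
    (x : A) (n : ℕ) :
    ‖hySeq h x (n+1) - hySeq h x n‖ ≤ θ * (1/2:ℝ)^(n+1) := by
  have key : hySeq h x (n+1) - hySeq h x n
      = ((2:ℂ)^(n+1))⁻¹ • (h ((2:ℂ)^n • x + (2:ℂ)^n • x)
          - h ((2:ℂ)^n • x) - h ((2:ℂ)^n • x)) := by
    have h1 : (2:ℂ)^(n+1) • x = (2:ℂ)^n • x + (2:ℂ)^n • x := by
      rw [← two_smul ℂ ((2:ℂ)^n • x), smul_smul]; ring_nf
    have h2 : ((2:ℂ)^(n+1))⁻¹ • ((2:ℂ) • h ((2:ℂ)^n • x)) = ((2:ℂ)^n)⁻¹ • h ((2:ℂ)^n • x) := by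
      rw [smul_smul]; congr 1; field_simp; ring
    simp only [hySeq, h1]
    rw [smul_sub, smul_sub, ← h2, two_smul, smul_add, sub_sub]
  rw [key, norm_smul]
  have hn : ‖((2:ℂ)^(n+1))⁻¹‖ = (1/2:ℝ)^(n+1) := by
    simp [norm_inv, norm_pow]
  rw [hn, mul_comm]
  exact mul_le_mul_of_nonneg_right (E _ _) (by positivity)

/-- Hyers' construction: existence of the limit with the stability bound. -/
lemma hyers {h : A → X} {θ : ℝ} (E : ∀ x y : A, ‖h (x + y) - h x - h y‖ ≤ θ) :
    ∃ D : A → X, (∀ x, Tendsto (hySeq h x) atTop (𝓝 (D x))) ∧ ∀ x, ‖h x - D x‖ ≤ θ := by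
  have hcauchy : ∀ x : A, CauchySeq (hySeq h x) := by
    intro x
    apply cauchySeq_of_le_geometric (1/2:ℝ) (θ/2) (by norm_num)
    intro n
    rw [dist_eq_norm, norm_sub_rev]
    calc ‖hySeq h x (n+1) - hySeq h x n‖ ≤ θ * (1/2:ℝ)^(n+1) := hy_norm_aux E x n
      _ = θ/2 * (1/2:ℝ)^n := by ring
  choose D hD using fun x => cauchySeq_tendsto_of_complete (hcauchy x)
  refine ⟨D, hD, fun x => ?_⟩
  have h0 : hySeq h x 0 = h x := by simp [hySeq]
  have := dist_le_of_le_geometric_of_tendsto₀ (1/2:ℝ) (θ/2) (by norm_num)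
    (f := hySeq h x) (fun n => by
      rw [dist_eq_norm, norm_sub_rev]
      calc ‖hySeq h x (n+1) - hySeq h x n‖ ≤ θ * (1/2:ℝ)^(n+1) := hy_norm_aux E x n
        _ = θ/2 * (1/2:ℝ)^n := by ring) (hD x)
  rw [h0, dist_eq_norm] at this
  calc ‖h x - D x‖ ≤ θ/2 / (1 - 1/2) := this
    _ = θ := by ring

lemma hyers_add {h D : A → X} {θ : ℝ}
    (hD : ∀ x, Tendsto (hySeq h x) atTop (𝓝 (D x)))
    (E : ∀ x y : A, ‖h (x + y) - h x - h y‖ ≤ θ) :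
    ∀ x y, D (x + y) = D x + D y := by
  intro x y
  have hsub : Tendsto (fun n => hySeq h (x+y) n - hySeq h x n - hySeq h y n) atTop
      (𝓝 (D (x+y) - D x - D y)) := ((hD (x+y)).sub (hD x)).sub (hD y)
  have hzero : Tendsto (fun n => hySeq h (x+y) n - hySeq h x n - hySeq h y n) atTop (𝓝 0) := by
    apply hy_tendsto_zero (θ := θ)
    intro n
    have key : hySeq h (x+y) n - hySeq h x n - hySeq h y n
        = ((2:ℂ)^n)⁻¹ • (h ((2:ℂ)^n • x + (2:ℂ)^n • y)
            - h ((2:ℂ)^n • x) - h ((2:ℂ)^n • y)) := by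
      simp [hySeq, smul_add, smul_sub]
    rw [key, norm_smul]
    have hn : ‖((2:ℂ)^n)⁻¹‖ = (1/2:ℝ)^n := by simp [norm_inv, norm_pow]
    rw [hn, mul_comm]
    exact mul_le_mul_of_nonneg_right (E _ _) (by positivity)
  have := tendsto_nhds_unique hsub hzero
  rw [sub_eq_zero, sub_eq_iff_eq_add] at this
  rw [this]; abel

lemma hyers_unit_smul {h D : A → X} {θ : ℝ}
    (hD : ∀ x, Tendsto (hySeq h x) atTop (𝓝 (D x)))
    (E : ∀ (μ : ℂ), ‖μ‖ = 1 → ∀ x : A, ‖h (μ • x) - μ • h x‖ ≤ θ) :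
    ∀ (μ : ℂ), ‖μ‖ = 1 → ∀ x : A, D (μ • x) = μ • D x := by
  intro μ hμ x
  have hsub : Tendsto (fun n => hySeq h (μ • x) n - μ • hySeq h x n) atTop
      (𝓝 (D (μ • x) - μ • D x)) := (hD (μ • x)).sub ((hD x).const_smul μ)
  have hzero : Tendsto (fun n => hySeq h (μ • x) n - μ • hySeq h x n) atTop (𝓝 0) := by
    apply hy_tendsto_zero (θ := θ)
    intro n
    have key : hySeq h (μ • x) n - μ • hySeq h x n
        = ((2:ℂ)^n)⁻¹ • (h (μ • ((2:ℂ)^n • x)) - μ • h ((2:ℂ)^n • x)) := by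
      simp only [hySeq, smul_sub]
      rw [smul_comm μ ((2:ℂ)^n) x, smul_comm μ (((2:ℂ)^n)⁻¹)]
    rw [key, norm_smul]
    have hn : ‖((2:ℂ)^n)⁻¹‖ = (1/2:ℝ)^n := by simp [norm_inv, norm_pow]
    rw [hn, mul_comm]
    exact mul_le_mul_of_nonneg_right (E μ hμ _) (by positivity)
  have := tendsto_nhds_unique hsub hzero
  rw [sub_eq_zero] at this
  exact this

/-- additive + unit-sphere homogeneous implies `ℂ`-homogeneous -/
lemma linear_of_add_unit {D : A → X}
    (hadd : ∀ x y : A, D (x + y) = D x + D y)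
    (hu : ∀ (μ : ℂ), ‖μ‖ = 1 → ∀ x : A, D (μ • x) = μ • D x) :
    ∀ (μ : ℂ) (x : A), D (μ • x) = μ • D x := by
  have h0 : D 0 = 0 := by
    have := hadd 0 0; simpa using this.symm
  have hnat : ∀ (n : ℕ) (y : A), D ((n:ℂ) • y) = (n:ℂ) • D y := by
    intro n
    induction n with
    | zero => intro y; simp [h0]
    | succ k ih =>
        intro y
        push_cast
        rw [add_smul, one_smul, hadd _ y, ih y, add_smul, one_smul]
  -- homogeneity for scalars of norm ≤ 1
  have hball : ∀ (z : ℂ), ‖z‖ ≤ 1 → ∀ x : A, D (z • x) = z • D x := by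
    intro z hz x
    rcases eq_or_ne z 0 with rfl | hz0
    · simp [h0]
    · set r : ℝ := ‖z‖ with hr
      have hrpos : 0 < r := norm_pos_iff.mpr hz0
      set u : ℂ := (r : ℂ)⁻¹ * z with hu_def
      have hur : ‖u‖ = 1 := by
        have h1 : ‖((r:ℂ))⁻¹‖ = r⁻¹ := by
          rw [norm_inv, Complex.norm_real, Real.norm_eq_abs, abs_of_pos hrpos]
        rw [hu_def, norm_mul, h1, hr]
        exact inv_mul_cancel₀ (norm_ne_zero_iff.mpr hz0)
      set s : ℝ := Real.sqrt (1 - r^2) with hs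
      have hs2 : s^2 = 1 - r^2 := Real.sq_sqrt (by nlinarith)
      set l1 : ℂ := u * (r + s * Complex.I) with hl1
      set l2 : ℂ := u * (r - s * Complex.I) with hl2
      have hnorm_aux : ∀ t : ℝ, ‖(r + t * Complex.I : ℂ)‖ = Real.sqrt (r^2 + t^2) := by
        intro t
        rw [Complex.norm_add_mul_I]
      have hl1n : ‖l1‖ = 1 := by
        rw [hl1, norm_mul, hur, one_mul, hnorm_aux s]
        rw [show r^2 + s^2 = 1 by nlinarith]
        exact Real.sqrt_one
      have hl2n : ‖l2‖ = 1 := by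
        have : (r : ℂ) - s * Complex.I = r + ((-s : ℝ) : ℂ) * Complex.I := by push_cast; ring
        rw [hl2, norm_mul, hur, one_mul, this, hnorm_aux (-s)]
        rw [show r^2 + (-s)^2 = 1 by nlinarith]
        exact Real.sqrt_one
      have hsum : l1 + l2 = 2 * z := by
        rw [hl1, hl2, hu_def]
        have : (r:ℂ) ≠ 0 := by exact_mod_cast hrpos.ne'
        field_simp
        ring
      have key : (2:ℂ) • D (z • x) = (2:ℂ) • (z • D x) := by
        have e1 : D ((l1 + l2) • x) = (l1 + l2) • D x := by
          rw [add_smul, hadd, hu l1 hl1n, hu l2 hl2n, add_smul]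
        have e2 : (l1 + l2) • x = (2:ℂ) • (z • x) := by
          rw [hsum, ← smul_smul]
        have e3 : D ((2:ℂ) • (z • x)) = (2:ℂ) • D (z • x) := by
          have : ((2:ℕ):ℂ) = (2:ℂ) := by norm_num
          rw [← this, hnat 2 (z • x)]
        rw [← e3, ← e2, e1, hsum, ← smul_smul]
      exact smul_right_injective X (by norm_num : (2:ℂ) ≠ 0) key
  intro μ x
  rcases eq_or_ne μ 0 with rfl | hμ0
  · simp [h0]
  · obtain ⟨n, hn⟩ := exists_nat_gt ‖μ‖
    have hnpos : 0 < (n:ℝ) := lt_of_le_of_lt (norm_nonneg μ) hn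
    have hn0 : (n:ℂ) ≠ 0 := by exact_mod_cast hnpos.ne'
    have hz : ‖μ / n‖ ≤ 1 := by
      rw [norm_div]
      rw [div_le_one (by simpa using hnpos)]
      simpa using hn.le
    have : D (μ • x) = D ((n:ℂ) • ((μ/n) • x)) := by
      rw [smul_smul]; congr 1; field_simp
    rw [this, hnat n _, hball _ hz, smul_smul]
    congr 1; field_simp

theorem stmt (f g : A → X) (θ : ℝ) (hθ : 0 ≤ θ)
    (hf0 : f 0 = 0) (hg0 : g 0 = 0) (hg1 : g 1 = 0)
    (h : ∀ (a b c : A) (μ : ℂ), ‖μ‖ = 1 →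
      max ‖f (μ • a + μ • b + c ^ 2) - μ • f a - μ • f b - c • f c - op c • g c‖
        ‖g (μ • (a * b) + μ • c) - μ • a • g b - μ • op b • g a - μ • g c‖ ≤ θ) :
    ∃! d : A → X, IsGenJordanDeriv d ∧ ∀ a : A, ‖f a - d a‖ ≤ θ := by
  -- extracted approximate identities
  have hf_add : ∀ x y : A, ‖f (x + y) - f x - f y‖ ≤ θ := by
    intro x y
    have := le_trans (le_max_left _ _) (h x y 0 1 (by simp))
    simpa [hf0, hg0] using this
  have hf_smul : ∀ (μ : ℂ), ‖μ‖ = 1 → ∀ x : A, ‖f (μ • x) - μ • f x‖ ≤ θ := by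
    intro μ hμ x
    have := le_trans (le_max_left _ _) (h x 0 0 μ hμ)
    simpa [hf0, hg0] using this
  have hf_jordan : ∀ c : A, ‖f (c ^ 2) - c • f c - op c • g c‖ ≤ θ := by
    intro c
    have := le_trans (le_max_left _ _) (h 0 0 c 1 (by simp))
    simpa [hf0, hg0] using this
  have hg_add : ∀ x y : A, ‖g (x + y) - g x - g y‖ ≤ θ := by
    intro x y
    have := le_trans (le_max_right _ _) (h 1 x y 1 (by simp))
    simpa [hg0, hg1] using this
  have hg_smul : ∀ (μ : ℂ), ‖μ‖ = 1 → ∀ x : A, ‖g (μ • x) - μ • g x‖ ≤ θ := by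
    intro μ hμ x
    have := le_trans (le_max_right _ _) (h 1 x 0 μ hμ)
    simpa [hg0, hg1] using this
  have hg_jordan : ∀ a : A, ‖g (a * a) - a • g a - op a • g a‖ ≤ θ := by
    intro a
    have := le_trans (le_max_right _ _) (h a a 0 1 (by simp))
    simpa [hg0] using this
  -- build δ and d
  obtain ⟨δ, hδ_lim, hδ_bd⟩ := hyers hg_add
  obtain ⟨d, hd_lim, hd_bd⟩ := hyers hf_add
  have hδ_add := hyers_add hδ_lim hg_add
  have hd_add := hyers_add hd_lim hf_add
  have hδ_hom := linear_of_add_unit hδ_add (hyers_unit_smul hδ_lim hg_smul)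
  have hd_hom := linear_of_add_unit hd_add (hyers_unit_smul hd_lim hf_smul)
  -- subsequence lemma: the limit along 2n
  have hsubseq : ∀ (hfun D : A → X), (∀ x, Tendsto (hySeq hfun x) atTop (𝓝 (D x))) →
      ∀ x, Tendsto (fun n => hySeq hfun x (2*n)) atTop (𝓝 (D x)) := by
    intro hfun D hD x
    exact (hD x).comp (tendsto_atTop_atTop_of_monotone (fun a b hab => by omega)
      (fun b => ⟨b, by omega⟩))
  -- key computation: hySeq at 2n splits
  have hsplit : ∀ (hfun : A → X) (c : A) (n : ℕ),
      hySeq hfun (c*c) (2*n) = ((2:ℂ)^n * (2:ℂ)^n)⁻¹ • hfun (((2:ℂ)^n • c) * ((2:ℂ)^n • c)) := by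
    intro hfun c n
    have e1 : (2:ℂ)^(2*n) = (2:ℂ)^n * (2:ℂ)^n := by rw [two_mul, pow_add]
    have e2 : ((2:ℂ)^n • c) * ((2:ℂ)^n • c) = ((2:ℂ)^n * (2:ℂ)^n) • (c * c) := by
      rw [smul_mul_smul_comm]
    rw [hySeq, e1, e2]
  -- Jordan property of δ
  have hδ_jordan : ∀ a : A, δ (a ^ 2) = a • δ a + op a • δ a := by
    intro a
    have hlim1 : Tendsto (fun n => hySeq g (a*a) (2*n)) atTop (𝓝 (δ (a*a))) :=
      hsubseq g δ hδ_lim (a*a)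
    have hlim2 : Tendsto (fun n => a • hySeq g a n + op a • hySeq g a n) atTop
        (𝓝 (a • δ a + op a • δ a)) :=
      ((hδ_lim a).const_smul a).add ((hδ_lim a).const_smul (op a))
    have hzero : Tendsto (fun n => hySeq g (a*a) (2*n)
        - (a • hySeq g a n + op a • hySeq g a n)) atTop (𝓝 0) := by
      apply hy_tendsto_zero (θ := θ)
      intro n
      set P : ℂ := (2:ℂ)^n with hP
      have hPne : P ≠ 0 := pow_ne_zero _ two_ne_zero
      have key : hySeq g (a*a) (2*n) - (a • hySeq g a n + op a • hySeq g a n)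
          = (P*P)⁻¹ • (g ((P • a) * (P • a)) - (P • a) • g (P • a)
              - op (P • a) • g (P • a)) := by
        rw [hsplit g a n, ← hP]
        have e3 : (P • a) • g (P • a) = P • (a • g (P • a)) := smul_assoc P a _
        have e4 : op (P • a) • g (P • a) = P • (op a • g (P • a)) := by
          rw [op_smul, smul_assoc]
        rw [smul_sub, smul_sub, e3, e4, smul_smul, smul_smul]
        have e5 : (P*P)⁻¹ * P = P⁻¹ := by field_simp
        rw [e5]
        simp only [hySeq, ← hP]
        rw [smul_comm a P⁻¹, smul_comm (op a) P⁻¹]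
        abel
      rw [key, norm_smul]
      have hn : ‖(P*P)⁻¹‖ ≤ (1/2:ℝ)^n := by
        rw [norm_inv, norm_mul, hP, norm_pow]
        simp only [Complex.norm_ofNat]
        rw [one_div, inv_pow]
        rw [inv_le_inv₀ (by positivity) (by positivity)]
        exact le_mul_of_one_le_left (by positivity) (one_le_pow₀ (by norm_num))
      calc ‖(P*P)⁻¹‖ * ‖_‖ ≤ (1/2:ℝ)^n * θ := by
            apply mul_le_mul hn (hg_jordan (P • a)) (norm_nonneg _) (by positivity)
        _ = θ * (1/2:ℝ)^n := mul_comm _ _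
    have := tendsto_nhds_unique (hlim1.sub hlim2) hzero
    rw [sub_eq_zero] at this
    rw [sq]
    exact this
  -- generalized Jordan property of d
  have hd_jordan : ∀ a : A, d (a ^ 2) = a • d a + op a • δ a := by
    intro a
    have hlim1 : Tendsto (fun n => hySeq f (a*a) (2*n)) atTop (𝓝 (d (a*a))) :=
      hsubseq f d hd_lim (a*a)
    have hlim2 : Tendsto (fun n => a • hySeq f a n + op a • hySeq g a n) atTop
        (𝓝 (a • d a + op a • δ a)) :=
      ((hd_lim a).const_smul a).add ((hδ_lim a).const_smul (op a))
    have hzero : Tendsto (fun n => hySeq f (a*a) (2*n)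
        - (a • hySeq f a n + op a • hySeq g a n)) atTop (𝓝 0) := by
      apply hy_tendsto_zero (θ := θ)
      intro n
      set P : ℂ := (2:ℂ)^n with hP
      have hPne : P ≠ 0 := pow_ne_zero _ two_ne_zero
      have key : hySeq f (a*a) (2*n) - (a • hySeq f a n + op a • hySeq g a n)
          = (P*P)⁻¹ • (f ((P • a) * (P • a)) - (P • a) • f (P • a)
              - op (P • a) • g (P • a)) := by
        rw [hsplit f a n, ← hP]
        have e3 : (P • a) • f (P • a) = P • (a • f (P • a)) := smul_assoc P a _
        have e4 : op (P • a) • g (P • a) = P • (op a • g (P • a)) := by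
          rw [op_smul, smul_assoc]
        rw [smul_sub, smul_sub, e3, e4, smul_smul, smul_smul]
        have e5 : (P*P)⁻¹ * P = P⁻¹ := by field_simp
        rw [e5]
        simp only [hySeq, ← hP]
        rw [smul_comm a P⁻¹, smul_comm (op a) P⁻¹]
        abel
      rw [key, norm_smul]
      have hn : ‖(P*P)⁻¹‖ ≤ (1/2:ℝ)^n := by
        rw [norm_inv, norm_mul, hP, norm_pow]
        simp only [Complex.norm_ofNat]
        rw [one_div, inv_pow]
        rw [inv_le_inv₀ (by positivity) (by positivity)]
        exact le_mul_of_one_le_left (by positivity) (one_le_pow₀ (by norm_num))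
      have hjf : ‖f ((P • a) * (P • a)) - (P • a) • f (P • a) - op (P • a) • g (P • a)‖ ≤ θ := by
        have := hf_jordan (P • a)
        rwa [sq] at this
      calc ‖(P*P)⁻¹‖ * ‖_‖ ≤ (1/2:ℝ)^n * θ := by
            apply mul_le_mul hn hjf (norm_nonneg _) (by positivity)
        _ = θ * (1/2:ℝ)^n := mul_comm _ _
    have := tendsto_nhds_unique (hlim1.sub hlim2) hzero
    rw [sub_eq_zero] at this
    rw [sq]
    exact this
  -- conclude existence
  refine ⟨d, ⟨⟨hd_add, hd_hom, δ, ⟨hδ_add, hδ_hom, hδ_jordan⟩, hd_jordan⟩, fun a => ?_⟩, ?_⟩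
  · exact hd_bd a
  · -- uniqueness
    rintro d' ⟨⟨hd'_add, hd'_hom, _⟩, hd'_bd⟩
    funext a
    by_contra hne
    have hc : 0 < ‖d' a - d a‖ := by
      rw [norm_pos_iff, sub_ne_zero]
      exact fun hh => hne hh
    obtain ⟨n, hn⟩ := exists_nat_gt ((2*θ)/‖d' a - d a‖)
    have hnbig : 2*θ < (n:ℝ) * ‖d' a - d a‖ := by
      rw [div_lt_iff₀ hc] at hn
      linarith
    have hd_nat : ∀ (D : A → X), (∀ (μ : ℂ) (x : A), D (μ • x) = μ • D x) →
        D ((n:ℂ) • a) = (n:ℂ) • D a := fun D hD => hD _ _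
    have hbound : ∀ x : A, ‖d' x - d x‖ ≤ 2*θ := by
      intro x
      calc ‖d' x - d x‖ = ‖(d' x - f x) + (f x - d x)‖ := by rw [sub_add_sub_cancel]
        _ ≤ ‖d' x - f x‖ + ‖f x - d x‖ := norm_add_le _ _
        _ ≤ θ + θ := add_le_add (by rw [norm_sub_rev]; exact hd'_bd x) (hd_bd x)
        _ = 2*θ := by ring
    have hx := hbound ((n:ℂ) • a)
    rw [hd'_hom, hd_hom, ← smul_sub, norm_smul] at hx
    simp only [Complex.norm_natCast] at hx
    linarith
end
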